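/- arXiv:2108.02631 — 2 statements merged into one kernel-verified Lean document; each statement's English description precedes it below -/
import Mathlib

section
/- Let r_1, r_2, r_3 be complex numbers and let R = [[1, -r_1, r_1],[0, 1-r_2, r_2],[0, 1-r_3, r_3]]. If r_3 = r_2 + x where x^2 + x + 1 = 0, then R^3 = I. -/
open Matrix

theorem stmt_2 (r₁ r₂ r₃ x : ℂ) (hx : x ^ 2 + x + 1 = 0) (h : r₃ = r₂ + x) :
    (!![1, -r₁, r₁; 0, 1 - r₂, r₂; 0, 1 - r₃, r₃] : Matrix (Fin 3) (Fin 3) ℂ) ^ 3 = 1 := by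
  subst h
  have h2 : x ^ 2 = -x - 1 := by linear_combination hx
  have h3 : x ^ 3 = 1 := by linear_combination (x - 1) * hx
  rw [pow_succ, pow_succ, pow_one, Matrix.mul_fin_three, Matrix.mul_fin_three,
    Matrix.one_fin_three]
  ext i j
  fin_cases i <;> fin_cases j <;>
    simp only [Fin.zero_eta, Fin.mk_one, Matrix.cons_val', Matrix.cons_val_zero,
      Matrix.cons_val_one, Matrix.head_cons, Matrix.cons_val_two, Matrix.tail_cons,
      Matrix.of_apply, Matrix.empty_val', Matrix.cons_val_fin_one, Matrix.head_fin_const,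
      show (⟨2, by norm_num⟩ : Fin 3) = 2 from rfl] <;>
    ring_nf <;> simp only [h2, h3] <;> ring_nf
end

section
/- With ω a primitive cube root of unity and (r_1, r_2) = (0,1), the matrices J = [[0,0,1],[-1,0,0],[0,1,0]] and R_1 = [[1,0,0],[0,0,1],[0,-ω,1+ω]] satisfy the relation (R_1 J)^12 = λ I for some nonzero complex scalar λ; that is, (R_1 J)^12 is a scalar matrix. -/
open Matrix

theorem stmt_8 (ω : ℂ) (hω : ω ^ 2 + ω + 1 = 0) (hω1 : ω ≠ 1) :
    let J : Matrix (Fin 3) (Fin 3) ℂ := !![0,0,1; -1,0,0; 0,1,0]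
    let R₁ : Matrix (Fin 3) (Fin 3) ℂ := !![1,0,0; 0,0,1; 0,-ω,1+ω]
    ∃ lam : ℂ, lam ≠ 0 ∧ (R₁ * J) ^ 12 = lam • (1 : Matrix (Fin 3) (Fin 3) ℂ) := by
  intro J R₁
  refine ⟨1, one_ne_zero, ?_⟩
  have hM : (R₁ * J) = !![0,0,1; 0,1,0; ω,1+ω,0] := by
    show (!![1,0,0; 0,0,1; 0,-ω,1+ω] : Matrix (Fin 3) (Fin 3) ℂ) *
        !![0,0,1; -1,0,0; 0,1,0] = _
    ext i j
    fin_cases i <;> fin_cases j <;>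
      simp [Matrix.mul_apply, Fin.sum_univ_succ, Matrix.vecHead, Matrix.vecTail] <;> ring
  have h2 : (!![0,0,1; 0,1,0; ω,1+ω,0] : Matrix (Fin 3) (Fin 3) ℂ) ^ 2 =
      !![ω,1+ω,0; 0,1,0; 0,1+ω,ω] := by
    rw [sq]
    ext i j
    fin_cases i <;> fin_cases j <;>
      simp [Matrix.mul_apply, Fin.sum_univ_succ, Matrix.vecHead, Matrix.vecTail] <;> ring
  have h4 : (!![ω,1+ω,0; 0,1,0; 0,1+ω,ω] : Matrix (Fin 3) (Fin 3) ℂ) ^ 2 =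
      !![-1-ω, ω, 0; 0,1,0; 0, ω, -1-ω] := by
    rw [sq]
    ext i j
    fin_cases i <;> fin_cases j <;>
      simp [Matrix.mul_apply, Fin.sum_univ_succ, Matrix.vecHead, Matrix.vecTail] <;>
      first
        | ring1
        | linear_combination hω
        | linear_combination -hω
        | linear_combination ω * hω
        | linear_combination -ω * hω
        | linear_combination (1 + ω) * hω
        | linear_combination (-1 - ω) * hω
  have h6 : (!![ω,1+ω,0; 0,1,0; 0,1+ω,ω] : Matrix (Fin 3) (Fin 3) ℂ) ^ 3 = 1 := by
    rw [pow_succ, h4]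
    ext i j
    fin_cases i <;> fin_cases j <;>
      simp [Matrix.mul_apply, Fin.sum_univ_succ, Matrix.one_apply, Matrix.vecHead, Matrix.vecTail] <;>
      first
        | ring1
        | linear_combination hω
        | linear_combination -hω
        | linear_combination ω * hω
        | linear_combination -ω * hω
        | linear_combination (1 + ω) * hω
        | linear_combination (-1 - ω) * hω
  rw [hM, one_smul, show (12 : ℕ) = 2 * 3 * 2 from rfl, pow_mul, pow_mul, h2, h6, one_pow]
end
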